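/- Sets of guarded strings over finite alphabets P (atomic programs) and B (primitive tests), with union as +, the partial concatenation product C · D = {x ⋄ y : x ∈ C, y ∈ D}, unit A_B (the set of atoms), star C* = ⋃_{n≥0} Cⁿ, and complementation on subsets of A_B defined by A_B − C, form a Kleene algebra with tests. -/

import Mathlib

/-- A guarded string over atomic programs `P` and primitive tests `B` is a
sequence `α₀ p₁ α₁ ⋯ pₖ αₖ` where each `αᵢ` is an atom of the free Boolean
algebra on `B` (identified with a function `B → Bool`) and each `pᵢ ∈ P`. -/
def GuardedString (P B : Type) : Type := (B → Bool) × List (P × (B → Bool))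

/-- The first atom of a guarded string. -/
def GuardedString.first {P B : Type} (x : GuardedString P B) : B → Bool := x.1

/-- The last atom of a guarded string. -/
def GuardedString.last {P B : Type} (x : GuardedString P B) : B → Bool :=
  (x.2.map Prod.snd).getLastD x.1

/-- The partial concatenation (coalesced product) of sets of guarded strings:
`C ⋄ D = {x ⋄ y : x ∈ C, y ∈ D}` where `x ⋄ y` is defined iff
`last x = first y`. -/
def gsProd {P B : Type} (C D : Set (GuardedString P B)) :
    Set (GuardedString P B) :=
  {z | ∃ x ∈ C, ∃ y ∈ D, GuardedString.last x = GuardedString.first y ∧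
    z = (x.1, x.2 ++ y.2)}

/-- The unit: the set of all atoms, viewed as length-zero guarded strings. -/
def gsOne (P B : Type) : Set (GuardedString P B) := {x | x.2 = []}

/-- Iterated product of a set of guarded strings. -/
def gsPow {P B : Type} (C : Set (GuardedString P B)) : ℕ → Set (GuardedString P B)
  | 0 => gsOne P B
  | n + 1 => gsProd C (gsPow C n)

/-- The asterate `C* = ⋃_{n ≥ 0} Cⁿ`. -/
def gsStar {P B : Type} (C : Set (GuardedString P B)) : Set (GuardedString P B) :=
  ⋃ n : ℕ, gsPow C n

/-- The complement of a set of atoms (a test): `A_B − C`. -/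
def gsCompl {P B : Type} (C : Set (GuardedString P B)) :
    Set (GuardedString P B) := gsOne P B \ C

/-- Sets of guarded strings over finite alphabets `P` and `B`, with union as
`+`, the coalesced product as `·`, `∅` as `0`, the set of atoms as `1`,
`C* = ⋃ₙ Cⁿ` as star, and complementation relative to the set of atoms on
tests, form a Kleene algebra with tests: all Kleene algebra axioms hold (with
`⊆` as the order), and the tests (subsets of the set of atoms) form a Boolean
algebra under `∪`, `⋄` and the relative complement. -/
lemma my_getLastD_append {A : Type*} (l1 l2 : List A) (d : A) :
    (l1 ++ l2).getLastD d = l2.getLastD (l1.getLastD d) := by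
  induction l1 generalizing d with
  | nil => simp
  | cons a l ih => rw [List.cons_append, List.getLastD_cons, List.getLastD_cons, ih]

lemma last_cat {P B : Type} (x y : GuardedString P B)
    (h : x.last = y.first) :
    GuardedString.last ((x.1, x.2 ++ y.2) : GuardedString P B) = y.last := by
  unfold GuardedString.last at *
  unfold GuardedString.first at h
  simp only [List.map_append, my_getLastD_append]
  rw [h]

lemma gsProd_assoc {P B : Type} (C D E : Set (GuardedString P B)) :
    gsProd (gsProd C D) E = gsProd C (gsProd D E) := by
  ext z
  constructor
  · rintro ⟨w, ⟨x, hx, y, hy, hxy, rfl⟩, v, hv, hwv, rfl⟩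
    rw [last_cat x y hxy] at hwv
    exact ⟨x, hx, (y.1, y.2 ++ v.2), ⟨y, hy, v, hv, hwv, rfl⟩, hxy,
      by simp [List.append_assoc] <;> rfl⟩
  · rintro ⟨x, hx, w, ⟨y, hy, v, hv, hyv, rfl⟩, hxw, rfl⟩
    exact ⟨(x.1, x.2 ++ y.2), ⟨x, hx, y, hy, hxw, rfl⟩, v, hv,
      by rw [last_cat x y hxw]; exact hyv, by simp [List.append_assoc] <;> rfl⟩

lemma gsOne_prod {P B : Type} (C : Set (GuardedString P B)) :
    gsProd (gsOne P B) C = C := by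
  ext z
  constructor
  · rintro ⟨x, hx, y, hy, hxy, rfl⟩
    have hx2 : x.2 = [] := hx
    have : x.last = x.1 := by simp [GuardedString.last, hx2]
    rw [this] at hxy
    simp only [hx2, List.nil_append, hxy]
    exact hy
  · intro hz
    exact ⟨(z.1, []), rfl, z, hz, rfl, rfl⟩

lemma gsProd_one {P B : Type} (C : Set (GuardedString P B)) :
    gsProd C (gsOne P B) = C := by
  ext z
  constructor
  · rintro ⟨x, hx, y, hy, hxy, rfl⟩
    have hy2 : y.2 = [] := hy
    simp only [hy2, List.append_nil]; exact hx
  · intro hz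
    exact ⟨z, hz, (z.last, []), rfl, rfl, by simp <;> rfl⟩

lemma gsProd_union_left {P B : Type} (C D E : Set (GuardedString P B)) :
    gsProd C (D ∪ E) = gsProd C D ∪ gsProd C E := by
  ext z; simp only [gsProd, Set.mem_setOf_eq, Set.mem_union]; aesop

lemma gsProd_union_right {P B : Type} (C D E : Set (GuardedString P B)) :
    gsProd (C ∪ D) E = gsProd C E ∪ gsProd D E := by
  ext z; simp only [gsProd, Set.mem_setOf_eq, Set.mem_union]; aesop

lemma gsProd_mono {P B : Type} {C C' D D' : Set (GuardedString P B)}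
    (h1 : C ⊆ C') (h2 : D ⊆ D') : gsProd C D ⊆ gsProd C' D' := by
  rintro z ⟨x, hx, y, hy, hxy, rfl⟩
  exact ⟨x, h1 hx, y, h2 hy, hxy, rfl⟩

lemma gsProd_iUnion_left {P B : Type} (f : ℕ → Set (GuardedString P B))
    (D : Set (GuardedString P B)) :
    gsProd (⋃ n, f n) D = ⋃ n, gsProd (f n) D := by
  ext z; simp only [gsProd, Set.mem_setOf_eq, Set.mem_iUnion]; aesop

lemma gsProd_iUnion_right {P B : Type} (C : Set (GuardedString P B))
    (f : ℕ → Set (GuardedString P B)) :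
    gsProd C (⋃ n, f n) = ⋃ n, gsProd C (f n) := by
  ext z; simp only [gsProd, Set.mem_setOf_eq, Set.mem_iUnion]; aesop

lemma gsPow_succ_right {P B : Type} (C : Set (GuardedString P B)) (n : ℕ) :
    gsPow C (n + 1) = gsProd (gsPow C n) C := by
  induction n with
  | zero => show gsProd C (gsOne P B) = gsProd (gsOne P B) C
            rw [gsProd_one, gsOne_prod]
  | succ n ih =>
      calc gsPow C (n+2) = gsProd C (gsProd (gsPow C n) C) := by
            rw [show gsPow C (n+2) = gsProd C (gsPow C (n+1)) from rfl, ih]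
        _ = gsProd (gsProd C (gsPow C n)) C := (gsProd_assoc _ _ _).symm
        _ = gsProd (gsPow C (n+1)) C := rfl

lemma gsTest_prod {P B : Type} (C D : Set (GuardedString P B))
    (hC : C ⊆ gsOne P B) (hD : D ⊆ gsOne P B) : gsProd C D = C ∩ D := by
  ext z
  constructor
  · rintro ⟨x, hx, y, hy, hxy, rfl⟩
    have hx2 : x.2 = [] := hC hx
    have hy2 : y.2 = [] := hD hy
    have hl : x.last = x.1 := by simp [GuardedString.last, hx2]
    rw [hl] at hxy
    have hxe : x = (x.1, x.2 ++ y.2) := by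
      rw [hx2, hy2]; exact Prod.ext rfl hx2
    have hye : y = (x.1, x.2 ++ y.2) := by
      rw [hx2, hy2]
      exact Prod.ext hxy.symm hy2
    exact ⟨hxe ▸ hx, hye ▸ hy⟩
  · rintro ⟨hz1, hz2⟩
    have hz : z.2 = [] := hC hz1
    exact ⟨z, hz1, z, hz2, by simp [GuardedString.last, GuardedString.first, hz],
      by rw [hz]; exact Prod.ext rfl hz⟩

lemma gsPow_subset_star {P B : Type} (C : Set (GuardedString P B)) (n : ℕ) :
    gsPow C n ⊆ gsStar C := Set.subset_iUnion (gsPow C) n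

lemma star_unfold_left {P B : Type} (C : Set (GuardedString P B)) :
    gsOne P B ∪ gsProd C (gsStar C) ⊆ gsStar C := by
  apply Set.union_subset (gsPow_subset_star C 0)
  rw [gsStar, gsProd_iUnion_right]
  exact Set.iUnion_subset fun n => gsPow_subset_star C (n+1)

lemma star_unfold_right {P B : Type} (C : Set (GuardedString P B)) :
    gsOne P B ∪ gsProd (gsStar C) C ⊆ gsStar C := by
  apply Set.union_subset (gsPow_subset_star C 0)
  rw [gsStar, gsProd_iUnion_left]
  exact Set.iUnion_subset fun n => by
    rw [← gsPow_succ_right]; exact gsPow_subset_star C (n+1)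

lemma star_ind_left {P B : Type} (C D X : Set (GuardedString P B))
    (h : D ∪ gsProd C X ⊆ X) : gsProd (gsStar C) D ⊆ X := by
  have hD : D ⊆ X := (Set.union_subset_iff.mp h).1
  have hCX : gsProd C X ⊆ X := (Set.union_subset_iff.mp h).2
  have key : ∀ n, gsProd (gsPow C n) D ⊆ X := by
    intro n
    induction n with
    | zero => rw [show gsPow C 0 = gsOne P B from rfl, gsOne_prod]; exact hD
    | succ n ih =>
        rw [show gsPow C (n+1) = gsProd C (gsPow C n) from rfl, gsProd_assoc]
        exact (gsProd_mono subset_rfl ih).trans hCX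
  rw [gsStar, gsProd_iUnion_left]
  exact Set.iUnion_subset key

lemma star_ind_right {P B : Type} (C D X : Set (GuardedString P B))
    (h : D ∪ gsProd X C ⊆ X) : gsProd D (gsStar C) ⊆ X := by
  have hD : D ⊆ X := (Set.union_subset_iff.mp h).1
  have hXC : gsProd X C ⊆ X := (Set.union_subset_iff.mp h).2
  have key : ∀ n, gsProd D (gsPow C n) ⊆ X := by
    intro n
    induction n with
    | zero => rw [show gsPow C 0 = gsOne P B from rfl, gsProd_one]; exact hD
    | succ n ih =>
        rw [gsPow_succ_right, ← gsProd_assoc]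
        exact (gsProd_mono ih subset_rfl).trans hXC
  rw [gsStar, gsProd_iUnion_right]
  exact Set.iUnion_subset key

theorem guardedStrings_form_KAT (P B : Type) [Fintype B] :
    -- idempotent semiring axioms
    (∀ C D E : Set (GuardedString P B), (C ∪ D) ∪ E = C ∪ (D ∪ E)) ∧
    (∀ C D : Set (GuardedString P B), C ∪ D = D ∪ C) ∧
    (∀ C : Set (GuardedString P B), C ∪ ∅ = C) ∧
    (∀ C : Set (GuardedString P B), C ∪ C = C) ∧
    (∀ C D E : Set (GuardedString P B),
      gsProd (gsProd C D) E = gsProd C (gsProd D E)) ∧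
    (∀ C : Set (GuardedString P B), gsProd (gsOne P B) C = C) ∧
    (∀ C : Set (GuardedString P B), gsProd C (gsOne P B) = C) ∧
    (∀ C D E : Set (GuardedString P B),
      gsProd C (D ∪ E) = gsProd C D ∪ gsProd C E) ∧
    (∀ C D E : Set (GuardedString P B),
      gsProd (C ∪ D) E = gsProd C E ∪ gsProd D E) ∧
    (∀ C : Set (GuardedString P B), gsProd ∅ C = ∅) ∧
    (∀ C : Set (GuardedString P B), gsProd C ∅ = ∅) ∧
    -- star axioms
    (∀ C : Set (GuardedString P B), gsOne P B ∪ gsProd C (gsStar C) ⊆ gsStar C) ∧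
    (∀ C : Set (GuardedString P B), gsOne P B ∪ gsProd (gsStar C) C ⊆ gsStar C) ∧
    (∀ C D X : Set (GuardedString P B),
      D ∪ gsProd C X ⊆ X → gsProd (gsStar C) D ⊆ X) ∧
    (∀ C D X : Set (GuardedString P B),
      D ∪ gsProd X C ⊆ X → gsProd D (gsStar C) ⊆ X) ∧
    -- the tests form an embedded Boolean algebra
    (∀ C D : Set (GuardedString P B), C ⊆ gsOne P B → D ⊆ gsOne P B →
      gsProd C D = C ∩ D) ∧
    (∀ C : Set (GuardedString P B), C ⊆ gsOne P B → gsCompl C ⊆ gsOne P B) ∧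
    (∀ C : Set (GuardedString P B), C ⊆ gsOne P B →
      gsProd C (gsCompl C) = ∅) ∧
    (∀ C : Set (GuardedString P B), C ⊆ gsOne P B →
      C ∪ gsCompl C = gsOne P B) ∧
    (∀ C : Set (GuardedString P B), C ⊆ gsOne P B →
      gsCompl (gsCompl C) = C) ∧
    (∀ C D : Set (GuardedString P B), C ⊆ gsOne P B → D ⊆ gsOne P B →
      gsProd C D = gsProd D C) ∧
    (∀ C D E : Set (GuardedString P B), C ⊆ gsOne P B → D ⊆ gsOne P B →
      E ⊆ gsOne P B → C ∪ gsProd D E = gsProd (C ∪ D) (C ∪ E)) := by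
  refine ⟨fun C D E => Set.union_assoc C D E, fun C D => Set.union_comm C D,
    fun C => Set.union_empty C, fun C => Set.union_self C,
    gsProd_assoc, gsOne_prod, gsProd_one, gsProd_union_left, gsProd_union_right,
    ?_, ?_, star_unfold_left, star_unfold_right, star_ind_left, star_ind_right,
    gsTest_prod, ?_, ?_, ?_, ?_, ?_, ?_⟩
  · intro C; ext z; simp [gsProd]
  · intro C; ext z; simp [gsProd]
  · intro C _; rw [gsCompl]; exact Set.diff_subset
  · intro C hC
    rw [gsCompl, gsTest_prod C _ hC Set.diff_subset]
    exact Set.inter_diff_self _ _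
  · intro C hC; rw [gsCompl]; exact Set.union_diff_cancel hC
  · intro C hC; rw [gsCompl, gsCompl]; exact Set.diff_diff_cancel_left hC
  · intro C D hC hD
    rw [gsTest_prod C D hC hD, gsTest_prod D C hD hC, Set.inter_comm]
  · intro C D E hC hD hE
    rw [gsTest_prod D E hD hE,
      gsTest_prod _ _ (Set.union_subset hC hD) (Set.union_subset hC hE)]
    exact Set.union_inter_distrib_left C D E
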